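/- Let f : ℝ^d → ℝ and h : ℝ^d → ℝ^n be differentiable, and fix c > 0, η_x > 0, η > 0. Consider the ALM iteration: x_{t+1} = x_t - η_x·(∇f(x_t) + (∇h(x_t))ᵀ(μ_t + c·h(x_t))), μ_{t+1} = μ_t + η·h(x_{t+1}); and the optimistic iteration with coefficient ω = c: ν_{t+1} = ν_t + η·h(x'_t) + c·(h(x'_t) - h(x'_{t-1})), x'_{t+1} = x'_t - η_x·(∇f(x'_t) + (∇h(x'_t))ᵀ ν_{t+1}) (with the convention ν_1 = ν_0 + η·h(x'_0) at the first step). If x'_0 = x_0 and ν_0 = μ_0 + (c - η)·h(x_0), then x'_t = x_t for all t ≥ 0, and moreover ν_{t+1} = μ_t + c·h(x_t) for all t ≥ 0. -/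
import Mathlib


theorem stmt_4 (d n : ℕ)
    (f : EuclideanSpace ℝ (Fin d) → ℝ)
    (h : EuclideanSpace ℝ (Fin d) → EuclideanSpace ℝ (Fin n))
    (hf : Differentiable ℝ f) (hh : Differentiable ℝ h)
    (c ηx η : ℝ) (hc : 0 < c) (hηx : 0 < ηx) (hη : 0 < η)
    (x x' : ℕ → EuclideanSpace ℝ (Fin d))
    (μ ν : ℕ → EuclideanSpace ℝ (Fin n))
    -- ALM iteration (primal-first GDA on the Augmented Lagrangian)
    (hx : ∀ t, x (t + 1) = x t - ηx •
      (gradient f (x t) + (fderiv ℝ h (x t)).adjoint (μ t + c • h (x t))))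
    (hμ : ∀ t, μ (t + 1) = μ t + η • h (x (t + 1)))
    -- optimistic iteration with coefficient ω = c on the standard Lagrangian
    (hν1 : ν 1 = ν 0 + η • h (x' 0))
    (hν : ∀ t, 1 ≤ t → ν (t + 1) =
      ν t + η • h (x' t) + c • (h (x' t) - h (x' (t - 1))))
    (hx' : ∀ t, x' (t + 1) = x' t - ηx •
      (gradient f (x' t) + (fderiv ℝ h (x' t)).adjoint (ν (t + 1))))
    -- matching initializations
    (hx0 : x' 0 = x 0)
    (hν0 : ν 0 = μ 0 + (c - η) • h (x 0)) :
    (∀ t, x' t = x t) ∧ (∀ t, ν (t + 1) = μ t + c • h (x t)) := by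
  have key : ∀ t, x' t = x t ∧ ν (t + 1) = μ t + c • h (x t) := by
    intro t
    induction t with
    | zero =>
      refine ⟨hx0, ?_⟩
      rw [hν1, hν0, hx0]
      module
    | succ t ih =>
      obtain ⟨h1, h2⟩ := ih
      have hx1 : x' (t + 1) = x (t + 1) := by
        rw [hx', hx, h1, h2]
      refine ⟨hx1, ?_⟩
      have hstep := hν (t + 1) (Nat.le_add_left 1 t)
      simp only [Nat.add_sub_cancel] at hstep
      rw [hstep, hμ, h2, hx1, h1]
      module
  exact ⟨fun t => (key t).1, fun t => (key t).2⟩
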